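/- Under the covariance assumption |cov(X(s₁),X(s₂))| ≤ C(1+‖s₁‖^γ+‖s₂‖^γ)ρ(‖s₁-s₂‖) with ρ bounded and ρ(u) ≤ u^{-β} for u ≥ 1, β < d, if an increasing sequence of positive reals (μₙ) satisfies Σₙ μₙ^{-(β-γ)} < ∞, then ξ(μₙ) = μₙ^{-d}∫_{μₙΔ} X(s) ds converges to 0 almost surely as n → ∞. -/

import Mathlib

open MeasureTheory Pointwise Filter

set_option maxHeartbeats 2000000

/-- Lemma 1(i): under the covariance assumption with `β < d`, if the increasing positive
sequence `(μₙ)` satisfies `Σₙ μₙ^{-(β-γ)} < ∞`, then `ξ(μₙ) → 0` almost surely. -/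
theorem stmt_3 (d : ℕ) (hd : 1 ≤ d) {Ω : Type*} [MeasureSpace Ω]
    (P : Measure Ω) [IsProbabilityMeasure P]
    (X : EuclideanSpace ℝ (Fin d) → Ω → ℝ)
    (hXmeas : Measurable (Function.uncurry X))
    (hXsq : ∀ s, Integrable (fun ω => (X s ω) ^ 2) P)
    (hmean : ∀ s, ∫ ω, X s ω ∂P = 0)
    (C γ β : ℝ) (hC : 0 < C) (hγ : 0 ≤ γ) (hβ : 0 < β) (hβd : β < d)
    (ρ : ℝ → ℝ) (hρpos : ∀ u, 0 ≤ u → 0 < ρ u)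
    (hρbdd : ∃ M, ∀ u, 0 ≤ u → ρ u ≤ M)
    (hρdec : ∀ u, 1 ≤ u → ρ u ≤ u ^ (-β))
    (hcov : ∀ s₁ s₂, |∫ ω, X s₁ ω * X s₂ ω ∂P| ≤
      C * (1 + ‖s₁‖ ^ γ + ‖s₂‖ ^ γ) * ρ ‖s₁ - s₂‖)
    (Δ : Set (EuclideanSpace ℝ (Fin d))) (hΔc : IsCompact Δ)
    (hΔ0 : (0 : EuclideanSpace ℝ (Fin d)) ∈ Δ) (hΔm : 0 < volume Δ)
    (ξ : ℝ → Ω → ℝ)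
    (hξ : ∀ μ ω, ξ μ ω = μ ^ (-(d : ℝ)) * ∫ s in μ • Δ, X s ω ∂volume)
    (μseq : ℕ → ℝ) (hμpos : ∀ n, 0 < μseq n) (hμmono : StrictMono μseq)
    (hsum : Summable (fun n => (μseq n) ^ (-(β - γ)))) :
    ∀ᵐ ω ∂P, Tendsto (fun n => ξ (μseq n) ω) atTop (nhds 0) := by
  classical
  -- basic constants
  obtain ⟨M, hM⟩ := hρbdd
  have hM0 : 0 < M := lt_of_lt_of_le (hρpos 0 le_rfl) (hM 0 le_rfl)
  obtain ⟨R₀, hR₀⟩ := hΔc.isBounded.subset_closedBall (0 : EuclideanSpace ℝ (Fin d))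
  set R : ℝ := max R₀ 1 with hRdef
  have hR1 : (1 : ℝ) ≤ R := le_max_right _ _
  have hR0 : (0 : ℝ) < R := lt_of_lt_of_le one_pos hR1
  have hΔR : Δ ⊆ Metric.closedBall 0 R :=
    hR₀.trans (Metric.closedBall_subset_closedBall (le_max_left _ _))
  haveI : Nontrivial (EuclideanSpace ℝ (Fin d)) := by
    have : 0 < Module.finrank ℝ (EuclideanSpace ℝ (Fin d)) := by simp; omega
    exact Module.nontrivial_of_finrank_pos this
  have hfr : Module.finrank ℝ (EuclideanSpace ℝ (Fin d)) = d := by simp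
  set c₁ : ℝ := (volume (Metric.ball (0 : EuclideanSpace ℝ (Fin d)) 1)).toReal with hc₁def
  have hc₁ : 0 ≤ c₁ := ENNReal.toReal_nonneg
  set vΔ : ℝ := (volume Δ).toReal with hvΔdef
  have hvΔ : 0 ≤ vΔ := ENNReal.toReal_nonneg
  have hdβ : (0 : ℝ) < (d : ℝ) - β := by
    have : (β : ℝ) < (d : ℝ) := hβd
    linarith
  -- the measurable majorant of ρ ∘ norm
  set g : EuclideanSpace ℝ (Fin d) → ℝ := fun t => if ‖t‖ < 1 then M else ‖t‖ ^ (-β) with hgdef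
  have hgmeas : Measurable g :=
    Measurable.ite (measurableSet_lt measurable_norm measurable_const)
      measurable_const (measurable_norm.pow_const _)
  have hg0 : ∀ t, 0 ≤ g t := by
    intro t
    by_cases h : ‖t‖ < 1 <;> simp only [hgdef, h, if_true, if_false]
    · exact hM0.le
    · exact Real.rpow_nonneg (norm_nonneg t) _
  have hgM : ∀ t, g t ≤ max M 1 := by
    intro t
    by_cases h : ‖t‖ < 1 <;> simp only [hgdef, h, if_true, if_false]
    · exact le_max_left _ _
    · exact le_trans (Real.rpow_le_one_of_one_le_of_nonpos (not_lt.1 h) (by linarith))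
        (le_max_right _ _)
  have hρg : ∀ t : EuclideanSpace ℝ (Fin d), ρ ‖t‖ ≤ g t := by
    intro t
    by_cases h : ‖t‖ < 1 <;> simp only [hgdef, h, if_true, if_false]
    · exact hM _ (norm_nonneg t)
    · exact hρdec _ (not_lt.1 h)
  -- basic measurability / integrability of X
  have hXm1 : ∀ s : EuclideanSpace ℝ (Fin d), Measurable (X s) := fun s =>
    hXmeas.comp measurable_prodMk_left
  have hIntXX : ∀ s : EuclideanSpace ℝ (Fin d), Integrable (fun ω => X s ω * X s ω) P := by
    intro s; simpa [pow_two] using hXsq s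
  have hV0 : ∀ s : EuclideanSpace ℝ (Fin d), 0 ≤ ∫ ω, X s ω * X s ω ∂P := fun s =>
    integral_nonneg fun ω => mul_self_nonneg _
  have habs : ∀ (a b : ℝ), |a * b| ≤ (a * a + b * b) / 2 := by
    intro a b
    rw [abs_mul]
    nlinarith [sq_nonneg (|a| - |b|), abs_nonneg a, abs_nonneg b, sq_abs a, sq_abs b]
  have hIntmul : ∀ s₁ s₂ : EuclideanSpace ℝ (Fin d),
      Integrable (fun ω => X s₁ ω * X s₂ ω) P := by
    intro s₁ s₂
    refine Integrable.mono' (((hIntXX s₁).add (hIntXX s₂)).div_const 2)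
      (((hXm1 s₁).mul (hXm1 s₂)).aestronglyMeasurable) (Eventually.of_forall fun ω => ?_)
    rw [Real.norm_eq_abs]
    exact habs _ _
  have hcovmom : ∀ s₁ s₂ : EuclideanSpace ℝ (Fin d), ∫ ω, |X s₁ ω * X s₂ ω| ∂P ≤
      ((∫ ω, X s₁ ω * X s₁ ω ∂P) + (∫ ω, X s₂ ω * X s₂ ω ∂P)) / 2 := by
    intro s₁ s₂
    have := integral_mono_of_nonneg (f := fun ω => |X s₁ ω * X s₂ ω|)
      (g := fun ω => (X s₁ ω * X s₁ ω + X s₂ ω * X s₂ ω) / 2)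
      (Eventually.of_forall fun ω => abs_nonneg _)
      (((hIntXX s₁).add (hIntXX s₂)).div_const 2)
      (Eventually.of_forall fun ω => habs _ _)
    rwa [integral_div, integral_add (hIntXX s₁) (hIntXX s₂)] at this
  -- global constants for the variance bound
  set W : ℝ := d * c₁ * (2 * R) ^ ((d : ℝ) - β) / ((d : ℝ) - β) with hWdef
  have hW0 : 0 ≤ W := by
    apply div_nonneg _ hdβ.le
    have : (0:ℝ) ≤ (2 * R) ^ ((d : ℝ) - β) := Real.rpow_nonneg (by positivity) _
    have : (0:ℝ) ≤ (d:ℝ) := Nat.cast_nonneg d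
    nlinarith [mul_nonneg (Nat.cast_nonneg d : (0:ℝ) ≤ d) hc₁,
      Real.rpow_nonneg (by positivity : (0:ℝ) ≤ 2 * R) ((d : ℝ) - β)]
  set D : ℝ := C * (1 + 2 * R ^ γ) * vΔ * (M * c₁ + W) with hDdef
  -- the key variance bound
  have key : ∀ μ : ℝ, 0 < μ → Integrable (fun ω => ξ μ ω ^ 2) P ∧
      (1 ≤ μ → ∫ ω, ξ μ ω ^ 2 ∂P ≤ D * μ ^ (γ - β)) := by
    intro μ hμ0
    set A : Set (EuclideanSpace ℝ (Fin d)) := μ • Δ with hAdef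
    have hAc : IsCompact A := hΔc.smul μ
    have hAmeas : MeasurableSet A := hAc.isClosed.measurableSet
    haveI : IsFiniteMeasure (volume.restrict A) :=
      ⟨by rw [Measure.restrict_apply_univ]; exact hAc.measure_lt_top⟩
    have hAnorm : ∀ s ∈ A, ‖s‖ ≤ μ * R := by
      rintro s ⟨x, hx, rfl⟩
      have hxR : ‖x‖ ≤ R := by
        have := hΔR hx
        rwa [Metric.mem_closedBall, dist_zero_right] at this
      calc ‖μ • x‖ = |μ| * ‖x‖ := by rw [norm_smul, Real.norm_eq_abs]
      _ = μ * ‖x‖ := by rw [abs_of_pos hμ0]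
      _ ≤ μ * R := mul_le_mul_of_nonneg_left hxR hμ0.le
    set K : ℝ := 1 + 2 * (μ * R) ^ γ with hKdef
    have hK0 : 0 < K := by positivity
    set Lsq : ℝ := C * K * M with hLsqdef
    have hVb : ∀ s ∈ A, ∫ ω, X s ω * X s ω ∂P ≤ Lsq := by
      intro s hs
      have h1 : ‖s‖ ^ γ ≤ (μ * R) ^ γ :=
        Real.rpow_le_rpow (norm_nonneg s) (hAnorm s hs) hγ
      have h2 := (le_abs_self _).trans (hcov s s)
      rw [sub_self, norm_zero] at h2
      calc ∫ ω, X s ω * X s ω ∂P ≤ C * (1 + ‖s‖ ^ γ + ‖s‖ ^ γ) * ρ 0 := h2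
      _ ≤ C * K * M := by
          apply mul_le_mul _ (hM 0 le_rfl) (hρpos 0 le_rfl).le (by positivity)
          apply mul_le_mul_of_nonneg_left _ hC.le
          rw [hKdef]
          have := Real.rpow_nonneg (norm_nonneg s) γ
          linarith
    -- the big product-integrability statement
    set G : (EuclideanSpace ℝ (Fin d) × EuclideanSpace ℝ (Fin d)) × Ω → ℝ :=
      fun p => X p.1.1 p.2 * X p.1.2 p.2 with hGdef
    have mG : Measurable G :=
      (hXmeas.comp ((measurable_fst.fst).prodMk measurable_snd)).mul
        (hXmeas.comp ((measurable_fst.snd).prodMk measurable_snd))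
    have hprodAe : ∀ᵐ p ∂((volume.restrict A).prod (volume.restrict A)),
        p.1 ∈ A ∧ p.2 ∈ A := by
      rw [Measure.prod_restrict]
      filter_upwards [ae_restrict_mem (hAmeas.prod hAmeas)] with p hp
      exact hp
    have hGint : Integrable G (((volume.restrict A).prod (volume.restrict A)).prod P) := by
      rw [integrable_prod_iff mG.aestronglyMeasurable]
      constructor
      · exact Eventually.of_forall fun p => hIntmul p.1 p.2
      · refine Integrable.mono' (integrable_const Lsq)
          (mG.norm.stronglyMeasurable.integral_prod_right').aestronglyMeasurable ?_
        filter_upwards [hprodAe] with p hp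
        have h1 : ∫ ω, ‖G (p, ω)‖ ∂P ≤ Lsq := by
          calc ∫ ω, ‖G (p, ω)‖ ∂P = ∫ ω, |X p.1 ω * X p.2 ω| ∂P := by
                apply integral_congr_ae (Eventually.of_forall fun ω => ?_)
                rw [hGdef]; exact Real.norm_eq_abs _
          _ ≤ ((∫ ω, X p.1 ω * X p.1 ω ∂P) + (∫ ω, X p.2 ω * X p.2 ω ∂P)) / 2 :=
                hcovmom p.1 p.2
          _ ≤ Lsq := by
                have h2 := hVb p.1 hp.1
                have h3 := hVb p.2 hp.2
                linarith
        rw [Real.norm_eq_abs, abs_of_nonneg (integral_nonneg fun ω => norm_nonneg _)]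
        exact h1
    set Y : Ω → ℝ := fun ω => ∫ s, X s ω ∂(volume.restrict A) with hYdef
    have hYsq : ∀ᵐ ω ∂P, Y ω * Y ω =
        ∫ p, G (p, ω) ∂((volume.restrict A).prod (volume.restrict A)) := by
      filter_upwards [hGint.prod_left_ae] with ω hω
      rw [integral_prod _ hω]
      simp only [hGdef]
      calc Y ω * Y ω = ∫ s₁, X s₁ ω * Y ω ∂(volume.restrict A) := by
            rw [integral_mul_const]
      _ = ∫ s₁, ∫ s₂, X s₁ ω * X s₂ ω ∂(volume.restrict A) ∂(volume.restrict A) := by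
            apply integral_congr_ae (Eventually.of_forall fun s₁ => ?_)
            rw [integral_const_mul]
    have hYint : Integrable (fun ω => Y ω * Y ω) P := by
      have h2 : Integrable
          (fun ω => ∫ p, G (p, ω) ∂((volume.restrict A).prod (volume.restrict A))) P :=
        hGint.swap.integral_prod_left
      exact h2.congr (hYsq.mono fun ω h => h.symm)
    have hswap : ∫ ω, Y ω * Y ω ∂P =
        ∫ p, (∫ ω, G (p, ω) ∂P) ∂((volume.restrict A).prod (volume.restrict A)) := by
      calc ∫ ω, Y ω * Y ω ∂P
          = ∫ ω, ∫ p, G (p, ω) ∂((volume.restrict A).prod (volume.restrict A)) ∂P :=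
            integral_congr_ae hYsq
      _ = ∫ z : Ω × (EuclideanSpace ℝ (Fin d) × EuclideanSpace ℝ (Fin d)), G (z.2, z.1)
            ∂(P.prod ((volume.restrict A).prod (volume.restrict A))) :=
            integral_integral (f := fun ω p => G (p, ω)) (by exact hGint.swap)
      _ = ∫ z, G z ∂(((volume.restrict A).prod (volume.restrict A)).prod P) :=
            integral_prod_swap G
      _ = ∫ p, (∫ ω, G (p, ω) ∂P) ∂((volume.restrict A).prod (volume.restrict A)) :=
            integral_prod G hGint
    -- majorant integral
    have hmajint : Integrable
        (fun p : EuclideanSpace ℝ (Fin d) × EuclideanSpace ℝ (Fin d) => g (p.1 - p.2))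
        ((volume.restrict A).prod (volume.restrict A)) := by
      refine Integrable.mono' (integrable_const (max M 1))
        ((hgmeas.comp (measurable_fst.sub measurable_snd)).aestronglyMeasurable)
        (Eventually.of_forall fun p => ?_)
      rw [Real.norm_eq_abs, abs_of_nonneg (hg0 _)]
      exact hgM _
    have hbound1 : ∫ ω, Y ω * Y ω ∂P ≤
        C * K * ∫ p, g (p.1 - p.2) ∂((volume.restrict A).prod (volume.restrict A)) := by
      rw [hswap]
      have hb : ∀ᵐ p ∂((volume.restrict A).prod (volume.restrict A)),
          (∫ ω, G (p, ω) ∂P) ≤ C * K * g (p.1 - p.2) := by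
        filter_upwards [hprodAe] with p hp
        have h1 : 1 + ‖p.1‖ ^ γ + ‖p.2‖ ^ γ ≤ K := by
          have e1 : ‖p.1‖ ^ γ ≤ (μ * R) ^ γ :=
            Real.rpow_le_rpow (norm_nonneg _) (hAnorm _ hp.1) hγ
          have e2 : ‖p.2‖ ^ γ ≤ (μ * R) ^ γ :=
            Real.rpow_le_rpow (norm_nonneg _) (hAnorm _ hp.2) hγ
          rw [hKdef]; linarith
        calc (∫ ω, G (p, ω) ∂P) ≤ |∫ ω, X p.1 ω * X p.2 ω ∂P| := le_abs_self _
        _ ≤ C * (1 + ‖p.1‖ ^ γ + ‖p.2‖ ^ γ) * ρ ‖p.1 - p.2‖ := hcov p.1 p.2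
        _ ≤ C * K * ρ ‖p.1 - p.2‖ :=
            mul_le_mul_of_nonneg_right (mul_le_mul_of_nonneg_left h1 hC.le)
              (hρpos _ (norm_nonneg _)).le
        _ ≤ C * K * g (p.1 - p.2) :=
            mul_le_mul_of_nonneg_left (hρg _) (by positivity)
      calc ∫ p, (∫ ω, G (p, ω) ∂P) ∂((volume.restrict A).prod (volume.restrict A))
          ≤ ∫ p, C * K * g (p.1 - p.2) ∂((volume.restrict A).prod (volume.restrict A)) :=
            integral_mono_ae hGint.integral_prod_left (hmajint.const_mul (C * K)) hb
      _ = C * K * ∫ p, g (p.1 - p.2) ∂((volume.restrict A).prod (volume.restrict A)) :=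
            integral_const_mul _ _
    -- the inner translation-invariance bound
    set T : ℝ := 2 * (μ * R) with hTdef
    have hT0 : 0 < T := by positivity
    set gT : EuclideanSpace ℝ (Fin d) → ℝ :=
      (Metric.closedBall (0 : EuclideanSpace ℝ (Fin d)) T).indicator g with hgTdef
    have hgT0 : ∀ t, 0 ≤ gT t := fun t => Set.indicator_nonneg (fun t _ => hg0 t) t
    have hgTint : Integrable gT volume := by
      rw [hgTdef, integrable_indicator_iff measurableSet_closedBall]
      haveI : IsFiniteMeasure (volume.restrict
          (Metric.closedBall (0 : EuclideanSpace ℝ (Fin d)) T)) :=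
        ⟨by rw [Measure.restrict_apply_univ]; exact measure_closedBall_lt_top⟩
      refine Integrable.mono' (integrable_const (max M 1))
        (hgmeas.aestronglyMeasurable.restrict) (Eventually.of_forall fun t => ?_)
      rw [Real.norm_eq_abs, abs_of_nonneg (hg0 _)]
      exact hgM _
    set J : ℝ := ∫ t, gT t ∂volume with hJdef
    have hJ0 : 0 ≤ J := integral_nonneg hgT0
    have hinner : ∀ s₁ ∈ A, ∫ s₂, g (s₁ - s₂) ∂(volume.restrict A) ≤ J := by
      intro s₁ hs₁
      have e0 : ∀ s₂ ∈ A, g (s₁ - s₂) = gT (s₁ - s₂) := by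
        intro s₂ hs₂
        rw [hgTdef, Set.indicator_of_mem]
        rw [Metric.mem_closedBall, dist_zero_right]
        calc ‖s₁ - s₂‖ ≤ ‖s₁‖ + ‖s₂‖ := norm_sub_le _ _
        _ ≤ μ * R + μ * R := add_le_add (hAnorm _ hs₁) (hAnorm _ hs₂)
        _ = T := by rw [hTdef]; ring
      calc ∫ s₂, g (s₁ - s₂) ∂(volume.restrict A)
          = ∫ s₂ in A, gT (s₁ - s₂) ∂volume :=
          setIntegral_congr_fun hAmeas (fun s₂ hs₂ => e0 s₂ hs₂)
      _ ≤ ∫ s₂, gT (s₁ - s₂) ∂volume :=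
          setIntegral_le_integral (hgTint.comp_sub_left s₁)
            (Eventually.of_forall fun t => hgT0 _)
      _ = J := integral_sub_left_eq_self gT volume s₁
    have houter : ∫ p, g (p.1 - p.2) ∂((volume.restrict A).prod (volume.restrict A)) ≤
        (volume A).toReal * J := by
      rw [integral_prod _ hmajint]
      calc ∫ s₁, (∫ s₂, g (s₁ - s₂) ∂(volume.restrict A)) ∂(volume.restrict A)
          ≤ ∫ _s₁, J ∂(volume.restrict A) := by
            apply integral_mono_of_nonneg
              (Eventually.of_forall fun s₁ => integral_nonneg fun s₂ => hg0 _)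
              (integrable_const J)
            filter_upwards [ae_restrict_mem hAmeas] with s₁ hs₁ using hinner s₁ hs₁
      _ = (volume A).toReal * J := by
            rw [integral_const, measureReal_def, Measure.restrict_apply_univ, smul_eq_mul]
    have hvA : (volume A).toReal = μ ^ d * vΔ := by
      rw [hAdef, Measure.addHaar_smul, hfr, ENNReal.toReal_mul,
        ENNReal.toReal_ofReal (abs_nonneg _), abs_of_pos (pow_pos hμ0 d), hvΔdef]
    have hξ2 : (fun ω => ξ μ ω ^ 2) = fun ω => (μ ^ (-(d : ℝ))) ^ 2 * (Y ω * Y ω) := by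
      funext ω
      rw [hξ μ ω, ← hAdef]
      simp only [hYdef]
      ring
    refine ⟨by rw [hξ2]; exact hYint.const_mul _, fun hμ1 => ?_⟩
    have hT1 : (1 : ℝ) ≤ T := by rw [hTdef]; nlinarith
    -- bound on J
    have hJle : J ≤ M * c₁ + (d * c₁) * (T ^ ((d : ℝ) - β) / ((d : ℝ) - β)) := by
      set q : ℝ → ℝ := (Set.Icc (1 : ℝ) T).indicator (fun y => y ^ (-β)) with hqdef
      have hq0 : ∀ y, 0 ≤ q y := fun y =>
        Set.indicator_nonneg (fun y hy => Real.rpow_nonneg (by linarith [hy.1]) _) y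
      set g₁ : EuclideanSpace ℝ (Fin d) → ℝ :=
        (Metric.ball (0 : EuclideanSpace ℝ (Fin d)) 1).indicator (fun _ => M) with hg₁def
      have hg₁0 : ∀ t, 0 ≤ g₁ t := fun t =>
        Set.indicator_nonneg (fun _ _ => hM0.le) t
      have hpoint : ∀ t, gT t ≤ g₁ t + q ‖t‖ := by
        intro t
        by_cases ht : t ∈ Metric.closedBall (0 : EuclideanSpace ℝ (Fin d)) T
        · rw [hgTdef, Set.indicator_of_mem ht]
          by_cases h1 : ‖t‖ < 1
          · have e1 : g₁ t = M := by
              rw [hg₁def, Set.indicator_of_mem (by rwa [Metric.mem_ball, dist_zero_right])]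
            have e2 : g t = M := by rw [hgdef]; simp [h1]
            rw [e1, e2]
            exact le_add_of_nonneg_right (hq0 _)
          · have hmem : ‖t‖ ∈ Set.Icc (1 : ℝ) T := by
              constructor
              · exact not_lt.1 h1
              · rwa [Metric.mem_closedBall, dist_zero_right] at ht
            have e1 : g t = ‖t‖ ^ (-β) := by rw [hgdef]; simp [h1]
            have e2 : q ‖t‖ = ‖t‖ ^ (-β) := by rw [hqdef, Set.indicator_of_mem hmem]
            rw [e1, e2]
            exact le_add_of_nonneg_left (hg₁0 _)
        · rw [hgTdef, Set.indicator_of_notMem ht]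
          exact add_nonneg (hg₁0 _) (hq0 _)
      have hg₁int : Integrable g₁ volume := by
        rw [hg₁def, integrable_indicator_iff measurableSet_ball]
        exact integrableOn_const measure_ball_lt_top.ne
      have hqnorm_eq : (fun t : EuclideanSpace ℝ (Fin d) => q ‖t‖) =
          Set.indicator {t : EuclideanSpace ℝ (Fin d) | ‖t‖ ∈ Set.Icc (1 : ℝ) T}
            (fun t => ‖t‖ ^ (-β)) := by
        funext t
        by_cases h : ‖t‖ ∈ Set.Icc (1 : ℝ) T
        · rw [hqdef]
          rw [Set.indicator_of_mem h, Set.indicator_of_mem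
            (show t ∈ {t : EuclideanSpace ℝ (Fin d) | ‖t‖ ∈ Set.Icc (1 : ℝ) T} from h)]
        · rw [hqdef]
          rw [Set.indicator_of_notMem h, Set.indicator_of_notMem
            (show t ∉ {t : EuclideanSpace ℝ (Fin d) | ‖t‖ ∈ Set.Icc (1 : ℝ) T} from h)]
      have hSmeas : MeasurableSet {t : EuclideanSpace ℝ (Fin d) | ‖t‖ ∈ Set.Icc (1 : ℝ) T} :=
        measurable_norm measurableSet_Icc
      have hSsub : {t : EuclideanSpace ℝ (Fin d) | ‖t‖ ∈ Set.Icc (1 : ℝ) T} ⊆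
          Metric.closedBall 0 T := by
        intro t ht
        rw [Metric.mem_closedBall, dist_zero_right]
        exact ht.2
      have hqnormint : Integrable (fun t : EuclideanSpace ℝ (Fin d) => q ‖t‖) volume := by
        rw [hqnorm_eq, integrable_indicator_iff hSmeas]
        haveI : IsFiniteMeasure (volume.restrict
            {t : EuclideanSpace ℝ (Fin d) | ‖t‖ ∈ Set.Icc (1 : ℝ) T}) :=
          ⟨by rw [Measure.restrict_apply_univ]
              exact lt_of_le_of_lt (measure_mono hSsub) measure_closedBall_lt_top⟩
        refine Integrable.mono' (integrable_const 1)
          ((measurable_norm.pow_const _).aestronglyMeasurable.restrict) ?_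
        filter_upwards [ae_restrict_mem hSmeas] with t ht
        rw [Real.norm_eq_abs, abs_of_nonneg (Real.rpow_nonneg (norm_nonneg t) _)]
        exact Real.rpow_le_one_of_one_le_of_nonpos ht.1 (by linarith)
      have hsplit : J ≤ (∫ t, g₁ t ∂volume) + ∫ t : EuclideanSpace ℝ (Fin d), q ‖t‖ ∂volume := by
        rw [hJdef]
        calc ∫ t, gT t ∂volume ≤ ∫ t : EuclideanSpace ℝ (Fin d), (g₁ t + q ‖t‖) ∂volume :=
            integral_mono_of_nonneg (Eventually.of_forall hgT0) (hg₁int.add hqnormint)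
              (Eventually.of_forall hpoint)
        _ = _ := integral_add hg₁int hqnormint
      have hg₁val : ∫ t, g₁ t ∂volume = c₁ * M := by
        rw [hg₁def, integral_indicator measurableSet_ball, setIntegral_const, smul_eq_mul,
          measureReal_def, ← hc₁def]
      have hpolar := integral_fun_norm_addHaar (volume : Measure (EuclideanSpace ℝ (Fin d))) q
      rw [hfr] at hpolar
      have hIvalue : ∫ y in Set.Ioi (0 : ℝ), y ^ (d - 1) • q y ≤
          T ^ ((d : ℝ) - β) / ((d : ℝ) - β) := by
        have e : ∀ y : ℝ, y ^ (d - 1) • q y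
            = (Set.Icc (1 : ℝ) T).indicator (fun y => y ^ (d - 1) * y ^ (-β)) y := by
          intro y
          by_cases h : y ∈ Set.Icc (1 : ℝ) T
          · simp only [hqdef, Set.indicator_of_mem h, smul_eq_mul]
          · simp only [hqdef, Set.indicator_of_notMem h, smul_zero]
        calc ∫ y in Set.Ioi (0 : ℝ), y ^ (d - 1) • q y
            = ∫ y in Set.Ioi (0 : ℝ),
                (Set.Icc (1 : ℝ) T).indicator (fun y => y ^ (d - 1) * y ^ (-β)) y := by
              simp_rw [e]
        _ = ∫ y in Set.Ioi (0 : ℝ) ∩ Set.Icc (1 : ℝ) T, y ^ (d - 1) * y ^ (-β) :=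
              setIntegral_indicator measurableSet_Icc
        _ = ∫ y in Set.Icc (1 : ℝ) T, y ^ (d - 1) * y ^ (-β) := by
              rw [Set.inter_eq_self_of_subset_right
                (show Set.Icc (1 : ℝ) T ⊆ Set.Ioi (0 : ℝ) from
                  fun y hy => lt_of_lt_of_le one_pos hy.1)]
        _ = ∫ y in Set.Ioc (1 : ℝ) T, y ^ (d - 1) * y ^ (-β) := integral_Icc_eq_integral_Ioc
        _ = ∫ y in (1 : ℝ)..T, y ^ (d - 1) * y ^ (-β) :=
              (intervalIntegral.integral_of_le hT1).symm
        _ = ∫ y in (1 : ℝ)..T, y ^ ((d : ℝ) - 1 - β) := by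
              apply intervalIntegral.integral_congr
              intro y hy
              rw [Set.uIcc_of_le hT1] at hy
              have hy0 : (0 : ℝ) < y := lt_of_lt_of_le one_pos hy.1
              show y ^ (d - 1) * y ^ (-β) = y ^ ((d : ℝ) - 1 - β)
              rw [← Real.rpow_natCast y (d - 1), Nat.cast_sub hd, Nat.cast_one,
                ← Real.rpow_add hy0, sub_eq_add_neg ((d:ℝ) - 1) β]
        _ = (T ^ ((d : ℝ) - 1 - β + 1) - 1 ^ ((d : ℝ) - 1 - β + 1)) / ((d : ℝ) - 1 - β + 1) :=
              integral_rpow (Or.inl (by linarith))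
        _ ≤ T ^ ((d : ℝ) - β) / ((d : ℝ) - β) := by
              rw [Real.one_rpow]
              have he : (d : ℝ) - 1 - β + 1 = (d : ℝ) - β := by ring
              rw [he]
              exact (div_le_div_iff_of_pos_right hdβ).2 (by linarith)
      have hIqval : ∫ t : EuclideanSpace ℝ (Fin d), q ‖t‖ ∂volume ≤ (d * c₁) * (T ^ ((d : ℝ) - β) / ((d : ℝ) - β)) := by
        rw [hpolar, nsmul_eq_mul, smul_eq_mul, measureReal_def, ← hc₁def, ← mul_assoc]
        exact mul_le_mul_of_nonneg_left hIvalue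
          (mul_nonneg (Nat.cast_nonneg d) hc₁)
      calc J ≤ (∫ t, g₁ t ∂volume) + ∫ t : EuclideanSpace ℝ (Fin d), q ‖t‖ ∂volume := hsplit
      _ ≤ c₁ * M + (d * c₁) * (T ^ ((d : ℝ) - β) / ((d : ℝ) - β)) := by
          rw [hg₁val]
          exact add_le_add_right hIqval _
      _ = M * c₁ + (d * c₁) * (T ^ ((d : ℝ) - β) / ((d : ℝ) - β)) := by ring
    -- assemble: the variance bound for μ ≥ 1
    rw [hξ2, integral_const_mul]
    have hZ0 : (0:ℝ) ≤ (μ ^ ((d:ℝ)) * vΔ) *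
        (M * c₁ + (d * c₁) * ((2 * R) ^ ((d : ℝ) - β) * μ ^ ((d : ℝ) - β) / ((d : ℝ) - β))) := by
      apply mul_nonneg (mul_nonneg (Real.rpow_nonneg hμ0.le _) hvΔ)
      apply add_nonneg (mul_nonneg hM0.le hc₁)
      apply mul_nonneg (mul_nonneg (Nat.cast_nonneg d) hc₁)
      apply div_nonneg _ hdβ.le
      exact mul_nonneg (Real.rpow_nonneg (by positivity) _) (Real.rpow_nonneg hμ0.le _)
    have hμd : (μ : ℝ) ^ d = μ ^ ((d : ℝ)) := (Real.rpow_natCast μ d).symm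
    have hKb : K ≤ (1 + 2 * R ^ γ) * μ ^ γ := by
      have h1 : (μ * R) ^ γ = μ ^ γ * R ^ γ := Real.mul_rpow hμ0.le hR0.le
      have h2 : (1 : ℝ) ≤ μ ^ γ := by
        have := Real.rpow_le_rpow_of_exponent_le hμ1 hγ
        rwa [Real.rpow_zero] at this
      have h3 : (0:ℝ) ≤ R ^ γ := Real.rpow_nonneg hR0.le γ
      rw [hKdef, h1]
      nlinarith
    have hTb : T ^ ((d : ℝ) - β) = (2 * R) ^ ((d : ℝ) - β) * μ ^ ((d : ℝ) - β) := by
      rw [hTdef, show 2 * (μ * R) = μ * (2 * R) by ring,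
        Real.mul_rpow hμ0.le (by positivity)]
      ring
    have hchain : ∫ ω, Y ω * Y ω ∂P ≤
        C * ((1 + 2 * R ^ γ) * μ ^ γ) * ((μ ^ ((d:ℝ)) * vΔ) *
          (M * c₁ + (d * c₁) * ((2 * R) ^ ((d : ℝ) - β) * μ ^ ((d : ℝ) - β) / ((d : ℝ) - β)))) := by
      refine hbound1.trans ?_
      have step : ∫ p, g (p.1 - p.2) ∂((volume.restrict A).prod (volume.restrict A)) ≤
          (μ ^ ((d:ℝ)) * vΔ) *
          (M * c₁ + (d * c₁) * ((2 * R) ^ ((d : ℝ) - β) * μ ^ ((d : ℝ) - β) / ((d : ℝ) - β))) := by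
        refine houter.trans ?_
        rw [hvA, hμd]
        apply mul_le_mul_of_nonneg_left _ (mul_nonneg (Real.rpow_nonneg hμ0.le _) hvΔ)
        refine hJle.trans ?_
        rw [hTb]
      calc C * K * ∫ p, g (p.1 - p.2) ∂((volume.restrict A).prod (volume.restrict A))
          ≤ C * K * ((μ ^ ((d:ℝ)) * vΔ) *
            (M * c₁ + (d * c₁) * ((2 * R) ^ ((d : ℝ) - β) * μ ^ ((d : ℝ) - β) / ((d : ℝ) - β)))) :=
            mul_le_mul_of_nonneg_left step (by positivity)
      _ ≤ C * ((1 + 2 * R ^ γ) * μ ^ γ) * ((μ ^ ((d:ℝ)) * vΔ) *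
            (M * c₁ + (d * c₁) * ((2 * R) ^ ((d : ℝ) - β) * μ ^ ((d : ℝ) - β) / ((d : ℝ) - β)))) :=
            mul_le_mul_of_nonneg_right (mul_le_mul_of_nonneg_left hKb hC.le) hZ0
    -- final arithmetic
    have eμ : ∀ x y : ℝ, μ ^ x * μ ^ y = μ ^ (x + y) := fun x y =>
      (Real.rpow_add hμ0 x y).symm
    have hp2 : (μ ^ (-(d : ℝ))) ^ 2 = μ ^ (-(2 * (d : ℝ))) := by
      rw [pow_two, eμ]
      congr 1
      ring
    have e₁ : μ ^ (-(2 * (d : ℝ))) * (μ ^ γ * μ ^ ((d : ℝ))) = μ ^ (γ - (d : ℝ)) := by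
      rw [eμ, eμ]
      congr 1
      ring
    have e₂ : μ ^ (-(2 * (d : ℝ))) * (μ ^ γ * (μ ^ ((d : ℝ)) * μ ^ ((d : ℝ) - β))) =
        μ ^ (γ - β) := by
      rw [eμ, eμ, eμ]
      congr 1
      ring
    have hbμ : μ ^ (γ - (d : ℝ)) ≤ μ ^ (γ - β) :=
      Real.rpow_le_rpow_of_exponent_le hμ1 (by linarith)
    have hCR0 : (0:ℝ) ≤ C * (1 + 2 * R ^ γ) * vΔ := by
      apply mul_nonneg _ hvΔ
      have := Real.rpow_nonneg hR0.le γ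
      nlinarith
    calc (μ ^ (-(d : ℝ))) ^ 2 * ∫ ω, Y ω * Y ω ∂P
        ≤ (μ ^ (-(d : ℝ))) ^ 2 * (C * ((1 + 2 * R ^ γ) * μ ^ γ) * ((μ ^ ((d:ℝ)) * vΔ) *
          (M * c₁ + (d * c₁) * ((2 * R) ^ ((d : ℝ) - β) * μ ^ ((d : ℝ) - β) / ((d : ℝ) - β))))) :=
          mul_le_mul_of_nonneg_left hchain (sq_nonneg _)
    _ = C * (1 + 2 * R ^ γ) * vΔ *
          ((M * c₁) * (μ ^ (-(2 * (d : ℝ))) * (μ ^ γ * μ ^ ((d : ℝ)))) +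
           (d * c₁ * (2 * R) ^ ((d : ℝ) - β) / ((d : ℝ) - β)) *
             (μ ^ (-(2 * (d : ℝ))) * (μ ^ γ * (μ ^ ((d : ℝ)) * μ ^ ((d : ℝ) - β))))) := by
          rw [hp2]
          ring
    _ = C * (1 + 2 * R ^ γ) * vΔ *
          ((M * c₁) * μ ^ (γ - (d : ℝ)) +
           (d * c₁ * (2 * R) ^ ((d : ℝ) - β) / ((d : ℝ) - β)) * μ ^ (γ - β)) := by
          rw [e₁, e₂]
    _ ≤ C * (1 + 2 * R ^ γ) * vΔ *
          ((M * c₁) * μ ^ (γ - β) +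
           (d * c₁ * (2 * R) ^ ((d : ℝ) - β) / ((d : ℝ) - β)) * μ ^ (γ - β)) := by
          apply mul_le_mul_of_nonneg_left _ hCR0
          have := mul_le_mul_of_nonneg_left hbμ (mul_nonneg hM0.le hc₁)
          linarith
    _ = D * μ ^ (γ - β) := by
          rw [hDdef, hWdef]
          ring
  -- from summability of variances to a.s. convergence
  have hβγ : γ < β := by
    by_contra hcon
    push_neg at hcon
    have ht0 := hsum.tendsto_atTop_zero
    have hpos0 : 0 < μseq 0 ^ (-(β - γ)) := Real.rpow_pos_of_pos (hμpos 0) _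
    have hlb : ∀ n, μseq 0 ^ (-(β - γ)) ≤ μseq n ^ (-(β - γ)) := fun n =>
      Real.rpow_le_rpow (hμpos 0).le (hμmono.monotone (Nat.zero_le n)) (by linarith)
    obtain ⟨n, hn⟩ := (ht0.eventually_lt_const hpos0).exists
    exact absurd (hlb n) (not_le.2 hn)
  have hμtop : Tendsto μseq atTop atTop := by
    have h1 : Tendsto (fun n => μseq n ^ (β - γ)) atTop atTop := by
      have h2 : Tendsto (fun n => (μseq n ^ (β - γ))⁻¹) atTop (nhdsWithin 0 (Set.Ioi 0)) := by
        apply tendsto_nhdsWithin_of_tendsto_nhds_of_eventually_within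
        · have : (fun n => (μseq n ^ (β - γ))⁻¹) = fun n => μseq n ^ (-(β - γ)) := by
            funext n
            rw [← Real.rpow_neg (hμpos n).le]
          rw [this]
          exact hsum.tendsto_atTop_zero
        · exact Eventually.of_forall fun n =>
            Set.mem_Ioi.2 (inv_pos.2 (Real.rpow_pos_of_pos (hμpos n) _))
      have h3 := h2.inv_tendsto_nhdsGT_zero
      refine h3.congr fun n => ?_
      simp
    have h2 := (tendsto_rpow_atTop (y := (β - γ)⁻¹) (by simp [sub_pos.2 hβγ] : (0:ℝ) < (β - γ)⁻¹)).comp h1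
    refine h2.congr fun n => ?_
    show (μseq n ^ (β - γ)) ^ (β - γ)⁻¹ = μseq n
    rw [← Real.rpow_mul (hμpos n).le, mul_inv_cancel₀ (by linarith : β - γ ≠ 0),
      Real.rpow_one]
  obtain ⟨N, hN⟩ : ∃ N, ∀ n ≥ N, 1 ≤ μseq n := eventually_atTop.1 (hμtop.eventually_ge_atTop 1)
  set S : ℕ → ℝ := fun n => ∫ ω, ξ (μseq n) ω ^ 2 ∂P with hSdef
  have hSint : ∀ n, Integrable (fun ω => ξ (μseq n) ω ^ 2) P := fun n =>
    (key _ (hμpos n)).1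
  have hS0 : ∀ n, 0 ≤ S n := fun n => integral_nonneg fun ω => sq_nonneg _
  have hsum' : Summable (fun n => (μseq n) ^ (γ - β)) := by
    have : (fun n => (μseq n) ^ (-(β - γ))) = fun n => (μseq n) ^ (γ - β) := by
      funext n; congr 1; ring
    rwa [this] at hsum
  have hSsum : Summable S := by
    rw [← summable_nat_add_iff N]
    apply Summable.of_nonneg_of_le (fun n => hS0 _)
      (fun n => (key _ (hμpos _)).2 (hN _ (Nat.le_add_left N n)))
    exact ((summable_nat_add_iff N).2 hsum').mul_left D
  have hξmeas : ∀ n, Measurable (fun ω => ξ (μseq n) ω) := by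
    intro n
    have h1 : (fun ω => ξ (μseq n) ω) =
        fun ω => (μseq n) ^ (-(d : ℝ)) * ∫ s in (μseq n) • Δ, X s ω ∂volume :=
      funext fun ω => hξ _ ω
    rw [h1]
    apply measurable_const.mul
    have hsm : StronglyMeasurable (fun p : Ω × EuclideanSpace ℝ (Fin d) => X p.2 p.1) :=
      (hXmeas.comp (measurable_snd.prodMk measurable_fst)).stronglyMeasurable
    exact hsm.integral_prod_right'.measurable
  have hlint : ∀ n, ∫⁻ ω, ENNReal.ofReal (ξ (μseq n) ω ^ 2) ∂P = ENNReal.ofReal (S n) :=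
    fun n => (ofReal_integral_eq_lintegral_ofReal (hSint n)
      (Eventually.of_forall fun ω => sq_nonneg _)).symm
  have hmeasE : ∀ n, Measurable (fun ω => ENNReal.ofReal (ξ (μseq n) ω ^ 2)) := fun n =>
    ((hξmeas n).pow_const 2).ennreal_ofReal
  have htsum : ∫⁻ ω, ∑' n, ENNReal.ofReal (ξ (μseq n) ω ^ 2) ∂P ≠ ⊤ := by
    rw [lintegral_tsum (fun n => (hmeasE n).aemeasurable)]
    have h1 : ∑' n, ∫⁻ ω, ENNReal.ofReal (ξ (μseq n) ω ^ 2) ∂P = ∑' n, ENNReal.ofReal (S n) :=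
      tsum_congr hlint
    rw [h1, ← ENNReal.ofReal_tsum_of_nonneg hS0 hSsum]
    exact ENNReal.ofReal_ne_top
  have hae : ∀ᵐ ω ∂P, (∑' n, ENNReal.ofReal (ξ (μseq n) ω ^ 2)) < ⊤ :=
    ae_lt_top (Measurable.ennreal_tsum hmeasE) htsum
  filter_upwards [hae] with ω hω
  have h0 : Tendsto (fun n => ENNReal.ofReal (ξ (μseq n) ω ^ 2)) atTop (nhds 0) :=
    ENNReal.tendsto_atTop_zero_of_tsum_ne_top hω.ne
  have h1 : Tendsto (fun n => ξ (μseq n) ω ^ 2) atTop (nhds 0) := by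
    have h2 := (ENNReal.tendsto_toReal (by simp : (0 : ENNReal) ≠ ⊤)).comp h0
    simp only [ENNReal.toReal_zero] at h2
    exact h2.congr fun n => ENNReal.toReal_ofReal (sq_nonneg _)
  refine tendsto_zero_iff_norm_tendsto_zero.2 ?_
  have h4 := (Real.continuous_sqrt.tendsto 0).comp h1
  rw [Real.sqrt_zero] at h4
  refine h4.congr fun n => ?_
  show Real.sqrt (ξ (μseq n) ω ^ 2) = ‖ξ (μseq n) ω‖
  rw [Real.sqrt_sq_eq_abs, Real.norm_eq_abs]
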